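/- Let n > 3 be odd. The integer m₀ = (n+1)/2 satisfies 1 < m₀ < n, gcd(m₀, n) = 1 and gcd(m₀ − 1, n) = 1; moreover, for every integer m with 1 < m < n, gcd(m, n) = 1 and gcd(m − 1, n) = 1, the loop L_n(m) is commutative — equivalently, m·j − (m−1)·i ≡ m·i − (m−1)·j (mod n) for all residues i, j modulo n — if and only if m = (n+1)/2. Hence the class L_n contains one and only one commutative loop. -/
import Mathlib


/-- `Lₙ` contains one and only one commutative loop, namely `Lₙ((n+1)/2)`. -/
theorem stmt_1 (n : ℕ) (hn : 3 < n) (hodd : Odd n) :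
    (1 < (n + 1) / 2 ∧ (n + 1) / 2 < n ∧
      Nat.gcd ((n + 1) / 2) n = 1 ∧ Nat.gcd ((n + 1) / 2 - 1) n = 1) ∧
    ∀ m : ℕ, 1 < m → m < n → Nat.gcd m n = 1 → Nat.gcd (m - 1) n = 1 →
      ((∀ i j : ZMod n,
          (m : ZMod n) * j - ((m : ZMod n) - 1) * i
            = (m : ZMod n) * i - ((m : ZMod n) - 1) * j)
        ↔ m = (n + 1) / 2) := by
  obtain ⟨k, rfl⟩ := hodd
  have hk : 2 ≤ k := by omega
  constructor
  · refine ⟨by omega, by omega, ?_, ?_⟩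
    · have h1 : (2 * k + 1 + 1) / 2 = k + 1 := by omega
      rw [h1]
      have : 2 * k + 1 = k + (k + 1) := by ring
      rw [this, Nat.gcd_add_self_right]
      simp [Nat.succ_eq_add_one, Nat.gcd_comm (k+1) k, Nat.gcd_self_add_left]
    · have h1 : (2 * k + 1 + 1) / 2 - 1 = k := by omega
      rw [h1]
      have : 2 * k + 1 = 1 + 2 * k := by ring
      rw [this, Nat.gcd_add_mul_right_right, Nat.gcd_one_right]
  · intro m hm1 hm2 _ _
    constructor
    · intro h
      have h01 := h 0 1
      simp only [mul_zero, mul_one, zero_sub, sub_zero] at h01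
      -- h01 : m = -(m - 1)
      have hz : ((2 * m - 1 : ℕ) : ZMod (2 * k + 1)) = 0 := by
        push_cast [Nat.cast_sub (by omega : 1 ≤ 2 * m)]
        linear_combination h01
      have hdvd : (2 * k + 1) ∣ (2 * m - 1) :=
        (ZMod.natCast_eq_zero_iff _ _).mp hz
      obtain ⟨c, hc⟩ := hdvd
      have hc0 : c ≠ 0 := by rintro rfl; omega
      have hc2 : c < 2 := by
        by_contra hcon
        push_neg at hcon
        have := Nat.mul_le_mul_left (2 * k + 1) hcon
        omega
      have : c = 1 := by omega
      subst this
      omega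
    · intro hm
      have h2m : 2 * m = 2 * k + 1 + 1 := by omega
      have hn0 : ((2 * k + 1 : ℕ) : ZMod (2 * k + 1)) = 0 := ZMod.natCast_self _
      have hcast : ((2 * m : ℕ) : ZMod (2 * k + 1)) = ((2 * k + 1 + 1 : ℕ) : ZMod (2 * k + 1)) := by
        rw [h2m]
      push_cast at hcast hn0
      have hkey : 2 * (m : ZMod (2 * k + 1)) - 1 = 0 := by
        linear_combination hcast + hn0
      intro i j
      linear_combination (j - i) * hkey
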